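/- Let P be a poset and V a persistence module indexed by P with two interval decompositions V = ⊕_{U ∈ A} U and V = ⊕_{W ∈ B} W. Let I be an interval in P, let C = {U ∈ A | U ≅ M(I)} and D = {W ∈ B | W ≇ M(I)}. Then (⊕_{U ∈ C} U) ∩ (⊕_{W ∈ D} W) = 0, i.e. for every x ∈ P the intersection of the subspaces ⊕_{U ∈ C} U_x and ⊕_{W ∈ D} W_x of V_x is zero. -/

import Mathlib

universe u v w w'

/-- A persistence module indexed by a poset `P`, over a field `k`. -/
structure PersMod (k : Type u) [Field k] (P : Type v) [PartialOrder P] :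
    Type (max u v (w + 1)) where
  space : P → Type w
  [acg : ∀ x, AddCommGroup (space x)]
  [mod : ∀ x, Module k (space x)]
  map : ∀ {x y : P}, x ≤ y → (space x →ₗ[k] space y)
  map_id : ∀ x : P, map (le_refl x) = LinearMap.id
  map_comp : ∀ {x y z : P} (hxy : x ≤ y) (hyz : y ≤ z),
    (map hyz).comp (map hxy) = map (hxy.trans hyz)

attribute [instance] PersMod.acg PersMod.mod

variable (k : Type u) [Field k] {P : Type v} [PartialOrder P]

/-- A morphism of persistence modules (a natural transformation). -/
structure PersHom (V : PersMod.{u, v, w} k P) (W : PersMod.{u, v, w'} k P) where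
  app : ∀ x : P, V.space x →ₗ[k] W.space x
  natural : ∀ {x y : P} (h : x ≤ y) (v : V.space x),
    app y (V.map h v) = W.map h (app x v)

/-- An isomorphism of persistence modules. -/
structure PersIso (V : PersMod.{u, v, w} k P) (W : PersMod.{u, v, w'} k P) where
  app : ∀ x : P, V.space x ≃ₗ[k] W.space x
  natural : ∀ {x y : P} (h : x ≤ y) (v : V.space x),
    app y (V.map h v) = W.map h (app x v)

/-- A subset `I` of a poset is convex if `x ≤ y ≤ z`, `x ∈ I`, `z ∈ I` imply `y ∈ I`. -/
def IsConvexIn (I : Set P) : Prop :=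
  ∀ ⦃x y z : P⦄, x ∈ I → z ∈ I → x ≤ y → y ≤ z → y ∈ I

/-- A subset `I` of a poset is connected if any two points of `I` are joined by a
zigzag path inside `I`. -/
def IsConnectedIn (I : Set P) : Prop :=
  ∀ x ∈ I, ∀ z ∈ I, ∃ (n : ℕ) (c : ℕ → P), (∀ i ≤ n, c i ∈ I) ∧ c 0 = x ∧ c n = z ∧
    ∀ i < n, c i ≤ c (i + 1) ∨ c (i + 1) ≤ c i

/-- An interval in a poset: nonempty, convex and connected. -/
def IsPosetInterval (I : Set P) : Prop :=
  I.Nonempty ∧ IsConvexIn I ∧ IsConnectedIn I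

open Classical in
/-- The subspace of `k` used as the value of the constant module at `x`. -/
noncomputable def constSub (I : Set P) (x : P) : Submodule k k :=
  if x ∈ I then ⊤ else ⊥

open Classical in
/-- The structure map of the constant module. -/
noncomputable def constMap (I : Set P) (x y : P) :
    constSub k I x →ₗ[k] constSub k I y :=
  LinearMap.codRestrict (constSub k I y)
    ((if y ∈ I then (LinearMap.id : k →ₗ[k] k) else 0).comp (constSub k I x).subtype)
    (fun c => by
      by_cases hy : y ∈ I
      · simp [constSub, hy]
      · simp only [constSub, hy, if_false]
        exact Submodule.zero_mem _)

open Classical in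
/-- The constant (interval) module `M(I)` attached to a convex subset `I`. -/
noncomputable def constMod (I : Set P) (hI : IsConvexIn I) : PersMod.{u, v, u} k P where
  space x := constSub k I x
  map {x y} _ := constMap k I x y
  map_id := fun x => by
    ext c
    by_cases hx : x ∈ I
    · simp [constMap, hx]
    · have hc : (c : k) = 0 := by
        have := c.2
        simp only [constSub, hx, if_false] at this
        exact (Submodule.mem_bot k).mp this
      simp [constMap, hx, hc]
  map_comp := fun {x y z} hxy hyz => by
    ext c
    by_cases hz : z ∈ I
    · by_cases hy : y ∈ I
      · simp [constMap, hy, hz]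
      · have hx : x ∉ I := fun hx => hy (hI hx hz hxy hyz)
        have hc : (c : k) = 0 := by
          have := c.2
          simp only [constSub, hx, if_false] at this
          exact (Submodule.mem_bot k).mp this
        simp [constMap, hy, hz, hc]
    · simp [constMap, hz]

/-- A submodule of a persistence module: a family of subspaces preserved by the
structure maps. -/
structure PersSubmod (V : PersMod.{u, v, w} k P) where
  carrier : ∀ x : P, Submodule k (V.space x)
  mapLe : ∀ {x y : P} (h : x ≤ y), ∀ v ∈ carrier x, V.map h v ∈ carrier y

/-- A submodule of a persistence module, viewed as a persistence module in its own
right. -/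
def PersSubmod.toPersMod {V : PersMod.{u, v, w} k P} (U : PersSubmod k V) :
    PersMod.{u, v, w} k P where
  space x := U.carrier x
  map {x y} h := (V.map h).restrict (U.mapLe h)
  map_id := fun x => by
    ext c
    simp [LinearMap.restrict_apply, V.map_id]
  map_comp := fun {x y z} hxy hyz => by
    ext c
    have := LinearMap.congr_fun (V.map_comp hxy hyz) (c : V.space x)
    simpa [LinearMap.restrict_apply] using this

/-- A persistence module is an interval module if it is isomorphic to a constant
module `M(I)` for some interval `I`. -/
def IsIntervalModule (V : PersMod.{u, v, w} k P) : Prop :=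
  ∃ (I : Set P) (hI : IsPosetInterval I), Nonempty (PersIso k V (constMod k I hI.2.1))

/-- `A` is an internal direct sum decomposition of `V`:
at each point the subspaces are independent and span everything. -/
def IsDecomp (V : PersMod.{u, v, w} k P) (A : Set (PersSubmod k V)) : Prop :=
  ∀ x : P, iSupIndep (fun U : A => (U : PersSubmod k V).carrier x) ∧
    ⨆ U : A, (U : PersSubmod k V).carrier x = ⊤

/-- An interval decomposition of `V`. -/
def IsIntervalDecomp (V : PersMod.{u, v, w} k P) (A : Set (PersSubmod k V)) : Prop :=
  IsDecomp k V A ∧ ∀ U ∈ A, IsIntervalModule k U.toPersMod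

/-- `V` has an interval decomposition. -/
def HasIntervalDecomp (V : PersMod.{u, v, w} k P) : Prop :=
  ∃ A : Set (PersSubmod k V), IsIntervalDecomp k V A

set_option linter.unusedSectionVars false

section AuxProof

variable {k}

theorem constSub_val_eq_zero {I : Set P} {x : P} (hx : x ∉ I) (v : constSub k I x) :
    (v : k) = 0 := by
  have := v.2
  simpa [constSub, hx] using this

theorem constMap_val_of_mem {I : Set P} (x : P) {y : P} (hy : y ∈ I) (v : constSub k I x) :
    ((constMap k I x y v : k)) = (v : k) := by
  simp [constMap, hy]

theorem constMap_val_of_not_mem {I : Set P} (x : P) {y : P} (hy : y ∉ I) (v : constSub k I x) :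
    ((constMap k I x y v : k)) = 0 := by
  simp [constMap, hy]

open Classical in
noncomputable def genAt (I : Set P) (x : P) : constSub k I x :=
  ⟨if x ∈ I then 1 else 0, by
    by_cases hx : x ∈ I
    · simp only [constSub, hx, if_true]; exact Submodule.mem_top
    · simp only [constSub, hx, if_false]; exact Submodule.zero_mem _⟩

theorem genAt_val_of_mem {I : Set P} {x : P} (hx : x ∈ I) : ((genAt I x : constSub k I x) : k) = 1 := by
  simp [genAt, hx]

end AuxProof
section AuxProof2
set_option linter.unusedSectionVars false
variable {k}

theorem const_endo_scalar {I : Set P} (hI : IsPosetInterval I)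
    (h : PersHom k (constMod k I hI.2.1) (constMod k I hI.2.1)) :
    ∃ c : k, ∀ (x : P) (v : (constMod k I hI.2.1).space x), h.app x v = c • v := by
  classical
  obtain ⟨x₀, hx₀⟩ := hI.1
  -- the scalar at each point
  set cv : P → k := fun x => (h.app x (genAt I x)).1 with hcv
  -- the scalar is constant along comparable pairs in I
  have hstep : ∀ {x y : P}, x ≤ y → x ∈ I → y ∈ I → cv x = cv y := by
    intro x y hxy hx hy
    have hnat := h.natural hxy (genAt I x)
    have h1 : (constMod k I hI.2.1).map hxy (genAt I x) = genAt I y := by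
      apply Subtype.ext
      show ((constMap k I x y (genAt I x) : k)) = _
      rw [constMap_val_of_mem x hy, genAt_val_of_mem hx, genAt_val_of_mem hy]
    rw [h1] at hnat
    have h2 := congrArg (Subtype.val) hnat
    have h3 : (((constMod k I hI.2.1).map hxy) (h.app x (genAt I x))).1
        = (h.app x (genAt I x)).1 := constMap_val_of_mem x hy _
    rw [h3] at h2
    exact h2.symm
  -- the scalar is constant on I by connectedness
  have hconst : ∀ x ∈ I, cv x = cv x₀ := by
    intro x hx
    obtain ⟨n, c, hmem, h0, hn, hzig⟩ := hI.2.2 x₀ hx₀ x hx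
    have key : ∀ i, i ≤ n → cv (c i) = cv x₀ := by
      intro i
      induction i with
      | zero => intro _; rw [h0]
      | succ m ih =>
        intro hi
        have hm : m ≤ n := by omega
        rcases hzig m (by omega) with h' | h'
        · rw [← hstep h' (hmem m hm) (hmem (m+1) hi)]; exact ih hm
        · rw [hstep h' (hmem (m+1) hi) (hmem m hm)]; exact ih hm
    rw [← hn]; exact key n le_rfl
  refine ⟨cv x₀, fun x v => ?_⟩
  by_cases hx : x ∈ I
  · have hvg : (v.1 • genAt I x).1 = v.1 * (genAt I x).1 := rfl
    have hv : v = v.1 • genAt I x := by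
      apply Subtype.ext
      change (Subtype.val (v : constSub k I x) : k) = ((v.1 • genAt I x : constSub k I x) : k)
      rw [hvg, genAt_val_of_mem hx, mul_one]
    rw [hv]
    erw [map_smul]
    apply Subtype.ext
    show v.1 * (h.app x (genAt I x)).1 = cv x₀ * (v.1 • genAt I x).1
    rw [show (h.app x (genAt I x)).1 = cv x from rfl, hconst x hx, hvg,
      genAt_val_of_mem hx]
    ring
  · have hv : v = 0 := by
      apply Subtype.ext
      exact constSub_val_eq_zero hx v
    rw [hv]
    simp

end AuxProof2
section AuxProof3
set_option linter.unusedSectionVars false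
variable {k}

def PersIso.symm {V : PersMod.{u, v, w} k P} {W : PersMod.{u, v, w'} k P}
    (e : PersIso k V W) : PersIso k W V where
  app x := (e.app x).symm
  natural {x y} h w := (e.app y).injective (by
    rw [LinearEquiv.apply_symm_apply, e.natural h, LinearEquiv.apply_symm_apply])

def PersIso.trans {V : PersMod.{u, v, w} k P} {W : PersMod.{u, v, w'} k P}
    {X : PersMod.{u, v, u} k P}
    (e : PersIso k V W) (e' : PersIso k W X) : PersIso k V X where
  app x := (e.app x).trans (e'.app x)
  natural {x y} h v := by
    show e'.app y (e.app y (V.map h v)) = X.map h (e'.app x (e.app x v))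
    rw [e.natural h, e'.natural h]

theorem const_comp_eq_zero {I J : Set P} (hI : IsPosetInterval I) (hJ : IsPosetInterval J)
    (hne : ¬ Nonempty (PersIso k (constMod k J hJ.2.1) (constMod k I hI.2.1)))
    (f : PersHom k (constMod k I hI.2.1) (constMod k J hJ.2.1))
    (g : PersHom k (constMod k J hJ.2.1) (constMod k I hI.2.1)) :
    ∀ (x : P) (v : (constMod k I hI.2.1).space x), g.app x (f.app x v) = 0 := by
  classical
  let gf : PersHom k (constMod k I hI.2.1) (constMod k I hI.2.1) :=
    { app := fun x => (g.app x).comp (f.app x)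
      natural := by
        intro x y hxy v
        show g.app y (f.app y _) = _
        rw [f.natural hxy, g.natural hxy]
        rfl }
  let fg : PersHom k (constMod k J hJ.2.1) (constMod k J hJ.2.1) :=
    { app := fun x => (f.app x).comp (g.app x)
      natural := by
        intro x y hxy v
        show f.app y (g.app y _) = _
        rw [g.natural hxy, f.natural hxy]
        rfl }
  obtain ⟨c, hc⟩ := const_endo_scalar hI gf
  obtain ⟨d, hd⟩ := const_endo_scalar hJ fg
  by_cases hc0 : c = 0
  · intro x v
    have := hc x v
    show gf.app x v = 0
    rw [this, hc0, zero_smul]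
  · exfalso
    obtain ⟨x₀, hx₀⟩ := hI.1
    have hone : f.app x₀ (genAt I x₀) ≠ 0 := by
      intro h0
      have := hc x₀ (genAt I x₀)
      have h1 : gf.app x₀ (genAt I x₀) = 0 := by
        show g.app x₀ (f.app x₀ _) = 0
        rw [h0, map_zero]
      rw [h1] at this
      have hval : (c • genAt I x₀ : constSub k I x₀).1 = c := by
        show c * (genAt I x₀).1 = c
        rw [genAt_val_of_mem hx₀, mul_one]
      have hv2 : (c • genAt I x₀ : constSub k I x₀).1 = 0 := congrArg Subtype.val this.symm
      rw [hval] at hv2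
      exact hc0 hv2
    have hcd : c = d := by
      have h1 : fg.app x₀ (f.app x₀ (genAt I x₀)) = d • f.app x₀ (genAt I x₀) := hd x₀ _
      have h2 : fg.app x₀ (f.app x₀ (genAt I x₀)) = c • f.app x₀ (genAt I x₀) := by
        show f.app x₀ (g.app x₀ (f.app x₀ (genAt I x₀))) = _
        have h3 : g.app x₀ (f.app x₀ (genAt I x₀)) = c • genAt I x₀ := hc x₀ _
        rw [h3]; exact map_smul _ _ _
      have h4 : (c - d) • f.app x₀ (genAt I x₀) = 0 := by
        rw [sub_smul, ← h2, h1, sub_self]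
      rcases smul_eq_zero.mp h4 with h5 | h5
      · exact sub_eq_zero.mp h5
      · exact absurd h5 hone
    -- build an isomorphism M(I) ≅ M(J)
    refine hne ⟨PersIso.symm
      { app := fun x => LinearEquiv.ofLinear (f.app x) (c⁻¹ • g.app x) ?_ ?_
        natural := fun {x y} h v => f.natural h v }⟩
    · ext w
      show f.app x (c⁻¹ • g.app x w) = w
      rw [map_smul]
      have : f.app x (g.app x w) = d • w := hd x w
      rw [this, ← hcd, smul_smul, inv_mul_cancel₀ hc0, one_smul]
    · ext v
      show c⁻¹ • g.app x (f.app x v) = v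
      have : g.app x (f.app x v) = c • v := hc x v
      rw [this, smul_smul, inv_mul_cancel₀ hc0, one_smul]

end AuxProof3
section AuxProof4
set_option linter.unusedSectionVars false
variable {k}

theorem PersIso.symm_natural {V : PersMod.{u, v, w} k P} {W : PersMod.{u, v, w'} k P}
    (e : PersIso k V W) {x y : P} (h : x ≤ y) (w : W.space x) :
    (e.app y).symm (W.map h w) = V.map h ((e.app x).symm w) :=
  (PersIso.symm e).natural h w

theorem comp_eq_zero_of_not_iso {X Y Z : PersMod.{u, v, w} k P} {I : Set P}
    (hI : IsPosetInterval I)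
    (eX : PersIso k X (constMod k I hI.2.1)) (eZ : PersIso k Z (constMod k I hI.2.1))
    (hY : IsIntervalModule k Y) (hYn : ¬ Nonempty (PersIso k Y (constMod k I hI.2.1)))
    (f : PersHom k X Y) (g : PersHom k Y Z) :
    ∀ (x : P) (v : X.space x), g.app x (f.app x v) = 0 := by
  obtain ⟨J, hJ, ⟨eY⟩⟩ := hY
  let f' : PersHom k (constMod k I hI.2.1) (constMod k J hJ.2.1) :=
    { app := fun x => ((eY.app x : Y.space x →ₗ[k] _).comp (f.app x)).comp
        ((eX.app x).symm : _ →ₗ[k] X.space x)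
      natural := by
        intro x y hxy v
        show eY.app y (f.app y ((eX.app y).symm _)) = _
        rw [eX.symm_natural hxy, f.natural hxy, eY.natural hxy]
        rfl }
  let g' : PersHom k (constMod k J hJ.2.1) (constMod k I hI.2.1) :=
    { app := fun x => ((eZ.app x : Z.space x →ₗ[k] _).comp (g.app x)).comp
        ((eY.app x).symm : _ →ₗ[k] Y.space x)
      natural := by
        intro x y hxy v
        show eZ.app y (g.app y ((eY.app y).symm _)) = _
        rw [eY.symm_natural hxy, g.natural hxy, eZ.natural hxy]
        rfl }
  have hne : ¬ Nonempty (PersIso k (constMod k J hJ.2.1) (constMod k I hI.2.1)) := by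
    rintro ⟨i⟩
    exact hYn ⟨PersIso.trans eY i⟩
  have h0 := const_comp_eq_zero hI hJ hne f' g'
  intro x v
  have h1 := h0 x (eX.app x v)
  have h2 : g'.app x (f'.app x (eX.app x v)) = eZ.app x (g.app x (f.app x v)) := by
    show eZ.app x (g.app x ((eY.app x).symm (eY.app x (f.app x ((eX.app x).symm (eX.app x v)))))) = _
    rw [LinearEquiv.symm_apply_apply, LinearEquiv.symm_apply_apply]
  rw [h2] at h1
  have := congrArg (eZ.app x).symm h1
  rwa [LinearEquiv.symm_apply_apply, map_zero] at this

end AuxProof4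
section AuxProof5
set_option linter.unusedSectionVars false
open Classical
variable {k} {V : PersMod.{u, v, w} k P}

theorem IsDecomp.isInternal {A : Set (PersSubmod k V)} (hA : IsDecomp k V A) (x : P) :
    DirectSum.IsInternal (fun U : A => (U : PersSubmod k V).carrier x) :=
  (DirectSum.isInternal_submodule_iff_iSupIndep_and_iSup_eq_top _).mpr ⟨(hA x).1, (hA x).2⟩

/-- The projection onto the summand `U` of the decomposition `A`, at the point `x`. -/
noncomputable def projAt {A : Set (PersSubmod k V)} (hA : IsDecomp k V A) (U : A) (x : P) :
    V.space x →ₗ[k] V.space x :=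
  (((U : PersSubmod k V).carrier x).subtype.comp
      (DirectSum.component k A (fun W : A => (W : PersSubmod k V).carrier x) U)).comp
    (LinearEquiv.ofBijective
      (DirectSum.coeLinearMap (fun W : A => (W : PersSubmod k V).carrier x))
      (hA.isInternal x)).symm.toLinearMap

theorem projAt_mem {A : Set (PersSubmod k V)} (hA : IsDecomp k V A) (U : A) (x : P)
    (v : V.space x) : projAt hA U x v ∈ (U : PersSubmod k V).carrier x :=
  SetLike.coe_mem _

theorem projAt_of_mem {A : Set (PersSubmod k V)} (hA : IsDecomp k V A) {U : A} {x : P}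
    {v : V.space x} (hv : v ∈ (U : PersSubmod k V).carrier x) : projAt hA U x v = v := by
  have h1 := (hA.isInternal x).ofBijective_coeLinearMap_of_mem hv
  exact congrArg Subtype.val h1

theorem projAt_of_mem_ne {A : Set (PersSubmod k V)} (hA : IsDecomp k V A) {U W : A} {x : P}
    (hUW : W ≠ U) {v : V.space x} (hv : v ∈ (W : PersSubmod k V).carrier x) :
    projAt hA U x v = 0 := by
  have h1 := (hA.isInternal x).ofBijective_coeLinearMap_of_mem_ne hUW hv
  exact congrArg Subtype.val h1

theorem projAt_natural {A : Set (PersSubmod k V)} (hA : IsDecomp k V A) (U : A)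
    {x y : P} (h : x ≤ y) (v : V.space x) :
    projAt hA U y (V.map h v) = V.map h (projAt hA U x v) := by
  have hv : v ∈ ⨆ (W : A), (W : PersSubmod k V).carrier x := by
    rw [(hA x).2]; trivial
  refine Submodule.iSup_induction (motive := fun v =>
    projAt hA U y (V.map h v) = V.map h (projAt hA U x v)) _ hv ?_ ?_ ?_
  · intro W u hu
    by_cases hWU : W = U
    · subst hWU
      rw [projAt_of_mem hA hu, projAt_of_mem hA ((W : PersSubmod k V).mapLe h u hu)]
    · rw [projAt_of_mem_ne hA hWU hu, projAt_of_mem_ne hA hWU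
        ((W : PersSubmod k V).mapLe h u hu), map_zero]
  · simp
  · intro u₁ u₂ h1 h2
    simp only [map_add, h1, h2]

/-- The projection onto the summand `U`, as a morphism from a submodule `S`. -/
noncomputable def projHom {A : Set (PersSubmod k V)} (hA : IsDecomp k V A)
    (S : PersSubmod k V) (U : A) : PersHom k S.toPersMod (U : PersSubmod k V).toPersMod where
  app x := LinearMap.codRestrict ((U : PersSubmod k V).carrier x)
    ((projAt hA U x).comp (S.carrier x).subtype) (fun u => projAt_mem hA U x (↑(show ((S.carrier x : Submodule k (V.space x))) from u)))
  natural {x y} h u := by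
    apply Subtype.ext
    show projAt hA U y (((V.map h).restrict (S.mapLe h)) u : V.space y)
      = ((V.map h).restrict ((U : PersSubmod k V).mapLe h)) _
    erw [LinearMap.restrict_apply, LinearMap.restrict_apply]
    exact projAt_natural hA U h (↑(show ((S.carrier x : Submodule k (V.space x))) from u))

theorem projAt_finsuppSum {A : Set (PersSubmod k V)} (hA : IsDecomp k V A)
    {ι : Type*} (em : ι → A) (hem : Function.Injective em) (x : P)
    (f : ι →₀ V.space x) (hf : ∀ i, f i ∈ (em i : PersSubmod k V).carrier x) (i₀ : ι) :
    projAt hA (em i₀) x (f.sum fun _ u => u) = f i₀ := by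
  classical
  simp only [Finsupp.sum]
  rw [map_sum]
  refine Eq.trans (Finset.sum_eq_single i₀ ?_ ?_) (projAt_of_mem hA (hf i₀))
  · intro b _ hbne
    exact projAt_of_mem_ne hA (fun hc => hbne (hem hc)) (hf b)
  · intro hni
    rw [Finsupp.notMem_support_iff.mp hni, map_zero]

end AuxProof5
section AuxProof6
set_option linter.unusedSectionVars false
open Classical
variable {k} {V : PersMod.{u, v, w} k P}

theorem proj_sandwich {A B : Set (PersSubmod k V)} (hA1 : IsDecomp k V A) (hB1 : IsDecomp k V B)
    {I : Set P} (hI : IsPosetInterval I) (U Ut : A) (W : B)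
    (hU : Nonempty (PersIso k (U : PersSubmod k V).toPersMod (constMod k I hI.2.1)))
    (hUt : Nonempty (PersIso k (Ut : PersSubmod k V).toPersMod (constMod k I hI.2.1)))
    (hW : IsIntervalModule k (W : PersSubmod k V).toPersMod)
    (hWn : ¬ Nonempty (PersIso k (W : PersSubmod k V).toPersMod (constMod k I hI.2.1)))
    (x : P) (u : V.space x) (hu : u ∈ (U : PersSubmod k V).carrier x) :
    projAt hA1 Ut x (projAt hB1 W x u) = 0 := by
  obtain ⟨eU⟩ := hU
  obtain ⟨eUt⟩ := hUt
  have h0 := comp_eq_zero_of_not_iso hI eU eUt hW hWn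
    (projHom hB1 (U : PersSubmod k V) W) (projHom hA1 (W : PersSubmod k V) Ut)
  have h1 := h0 x ⟨u, hu⟩
  exact congrArg Subtype.val h1

end AuxProof6
/-- Given two interval decompositions `V = ⊕_{U ∈ A} U = ⊕_{W ∈ B} W` and an interval
`I`, let `C ⊆ A` consist of the summands isomorphic to `M(I)` and `D ⊆ B` of the
summands not isomorphic to `M(I)`.  Then `(⊕_{U ∈ C} U) ∩ (⊕_{W ∈ D} W) = 0`
pointwise. -/
theorem interval_decomp_intersection_eq_bot (P : Type v) [PartialOrder P]
    (V : PersMod.{u, v, w} k P) (A B : Set (PersSubmod k V))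
    (hA : IsIntervalDecomp k V A) (hB : IsIntervalDecomp k V B)
    (I : Set P) (hI : IsPosetInterval I) :
    ∀ x : P,
      (⨆ U : {T : PersSubmod k V // T ∈ A ∧
          Nonempty (PersIso k T.toPersMod (constMod k I hI.2.1))}, U.1.carrier x) ⊓
      (⨆ W : {T : PersSubmod k V // T ∈ B ∧
          ¬ Nonempty (PersIso k T.toPersMod (constMod k I hI.2.1))}, W.1.carrier x)
        = ⊥ := by
  classical
  intro x
  rw [eq_bot_iff]
  intro v hv
  obtain ⟨hvC, hvD⟩ := Submodule.mem_inf.mp hv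
  obtain ⟨fC, hfCmem, hfC⟩ := (Submodule.mem_iSup_iff_exists_finsupp _ v).mp hvC
  obtain ⟨fD, hfDmem, hfD⟩ := (Submodule.mem_iSup_iff_exists_finsupp _ v).mp hvD
  have hinjA : Function.Injective (fun U : {T : PersSubmod k V // T ∈ A ∧
      Nonempty (PersIso k T.toPersMod (constMod k I hI.2.1))} => (⟨U.1, U.2.1⟩ : A)) := by
    intro a b hab
    have h2 : (⟨a.1, a.2.1⟩ : A) = ⟨b.1, b.2.1⟩ := hab
    have h3 : a.1 = b.1 := congrArg (fun t : A => t.1) h2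
    exact Subtype.ext h3
  have hinjB : Function.Injective (fun W : {T : PersSubmod k V // T ∈ B ∧
      ¬ Nonempty (PersIso k T.toPersMod (constMod k I hI.2.1))} => (⟨W.1, W.2.1⟩ : B)) := by
    intro a b hab
    have h2 : (⟨a.1, a.2.1⟩ : B) = ⟨b.1, b.2.1⟩ := hab
    have h3 : a.1 = b.1 := congrArg (fun t : B => t.1) h2
    exact Subtype.ext h3
  have hCcomp : ∀ U₀ : {T : PersSubmod k V // T ∈ A ∧
      Nonempty (PersIso k T.toPersMod (constMod k I hI.2.1))},
      fC U₀ = projAt hA.1 ⟨U₀.1, U₀.2.1⟩ x v := by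
    intro U₀
    conv_rhs => rw [← hfC]
    exact (projAt_finsuppSum hA.1 _ hinjA x fC (fun i => hfCmem i) U₀).symm
  have hDcomp : ∀ W₀ : {T : PersSubmod k V // T ∈ B ∧
      ¬ Nonempty (PersIso k T.toPersMod (constMod k I hI.2.1))},
      fD W₀ = projAt hB.1 ⟨W₀.1, W₀.2.1⟩ x v := by
    intro W₀
    conv_rhs => rw [← hfD]
    exact (projAt_finsuppSum hB.1 _ hinjB x fD (fun i => hfDmem i) W₀).symm
  have hzero : ∀ U₀ : {T : PersSubmod k V // T ∈ A ∧
      Nonempty (PersIso k T.toPersMod (constMod k I hI.2.1))},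
      projAt hA.1 ⟨U₀.1, U₀.2.1⟩ x v = 0 := by
    intro U₀
    conv_lhs => rw [← hfD]
    simp only [Finsupp.sum]
    rw [map_sum]
    refine Finset.sum_eq_zero fun W _ => ?_
    rw [hDcomp W]
    conv_lhs => rw [← hfC]
    simp only [Finsupp.sum]
    rw [map_sum, map_sum]
    refine Finset.sum_eq_zero fun U _ => ?_
    exact proj_sandwich hA.1 hB.1 hI ⟨U.1, U.2.1⟩ ⟨U₀.1, U₀.2.1⟩ ⟨W.1, W.2.1⟩ U.2.2 U₀.2.2
      (hB.2 W.1 W.2.1) W.2.2 x (fC U) (hfCmem U)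
  rw [Submodule.mem_bot, ← hfC]
  simp only [Finsupp.sum]
  refine Finset.sum_eq_zero fun U _ => ?_
  rw [hCcomp U, hzero U]
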